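/- Let b ∈ C with q(b) ≠ 0, and let M, M' be the two type-2 vertex lattices containing Λ_b. Then for every type-2 vertex lattice Λ one has n(b,Λ) = ord_{π₀}(q(b)) − min(d_G(Λ,M), d_G(Λ,M')). -/

import Mathlib

noncomputable section

attribute [local instance] Classical.propDecidable

variable {F : Type} [Field F]

/-- Membership in the valuation ring `O_F = {x : F | x = 0 ∨ v x ≥ 0}`. -/
def inO (v : F → ℤ) (x : F) : Prop := x = 0 ∨ 0 ≤ v x

/-- The Hermitian form `h(x, y) = x₁ · σ(y₂) + x₂ · σ(y₁)` on `C = F²`. -/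
def herm (σ : F →+* F) (x y : F × F) : F := x.1 * σ y.2 + x.2 * σ y.1

/-- The `O_F`-span of two vectors of `C = F²`. -/
def spanL (v : F → ℤ) (u w : F × F) : Set (F × F) :=
  {x | ∃ a b : F, inO v a ∧ inO v b ∧ x = a • u + b • w}

/-- An `O_F`-lattice in `C`: a free rank-2 `O_F`-submodule spanning `C` over `F`. -/
def IsLattice (v : F → ℤ) (Λ : Set (F × F)) : Prop :=
  ∃ u w : F × F, LinearIndependent F ![u, w] ∧ Λ = spanL v u w

/-- The dual lattice `Λ^♯ = {x ∈ C | h(x, Λ) ⊆ O_F}`. -/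
def dualL (σ : F →+* F) (v : F → ℤ) (Λ : Set (F × F)) : Set (F × F) :=
  {x | ∀ y ∈ Λ, inO v (herm σ x y)}

/-- A vertex lattice of type 0: a self-dual lattice. -/
def IsVertex0 (σ : F →+* F) (v : F → ℤ) (Λ : Set (F × F)) : Prop :=
  IsLattice v Λ ∧ dualL σ v Λ = Λ

/-- A vertex lattice of type 2: a lattice with `Λ^♯ = π Λ`
(equivalently `πΛ ⊆ Λ^♯ ⊆ Λ` with `Λ/Λ^♯` two-dimensional over the residue field). -/
def IsVertex2 (σ : F →+* F) (π : F) (v : F → ℤ) (Λ : Set (F × F)) : Prop :=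
  IsLattice v Λ ∧ dualL σ v Λ = (fun x => π • x) '' Λ

/-- A vertex lattice (of type 0 or type 2). -/
def IsVertex (σ : F →+* F) (π : F) (v : F → ℤ) (Λ : Set (F × F)) : Prop :=
  IsVertex0 σ v Λ ∨ IsVertex2 σ π v Λ

/-- `nIs π b Λ n` says that `n = n(b, Λ)` is the largest integer `m` with `π⁻ᵐ b ∈ Λ`. -/
def nIs (π : F) (b : F × F) (Λ : Set (F × F)) (n : ℤ) : Prop :=
  IsGreatest {m : ℤ | (π ^ (-m)) • b ∈ Λ} n

/-- Adjacency of type-2 vertex lattices: distinct, with intersection a type-0 vertex lattice. -/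
def AdjV (σ : F →+* F) (π : F) (v : F → ℤ) (Λ Λ' : Set (F × F)) : Prop :=
  IsVertex2 σ π v Λ ∧ IsVertex2 σ π v Λ' ∧ Λ ≠ Λ' ∧ IsVertex0 σ v (Λ ∩ Λ')

/-- There is a walk of length `k` between `Λ` and `Λ'` in the Bruhat–Tits tree. -/
def WalkN (σ : F →+* F) (π : F) (v : F → ℤ) (k : ℕ) (Λ Λ' : Set (F × F)) : Prop :=
  ∃ f : ℕ → Set (F × F), f 0 = Λ ∧ f k = Λ' ∧ ∀ i < k, AdjV σ π v (f i) (f (i + 1))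

/-- `dGIs σ π v Λ Λ' k` : the graph distance `d_G(Λ, Λ')` equals `k`. -/
def dGIs (σ : F →+* F) (π : F) (v : F → ℤ) (Λ Λ' : Set (F × F)) (k : ℕ) : Prop :=
  IsLeast {j : ℕ | WalkN σ π v j Λ Λ'} k

/-- `P` is a type-2 "hull" of the vertex lattice `Λ`: `P = Λ` when `Λ` has type 2,
and `P` is a type-2 vertex lattice containing `Λ` when `Λ` has type 0. -/
def HullOf (σ : F →+* F) (π : F) (v : F → ℤ) (Λ P : Set (F × F)) : Prop :=
  (IsVertex2 σ π v Λ ∧ P = Λ) ∨ (IsVertex0 σ v Λ ∧ IsVertex2 σ π v P ∧ Λ ⊆ P)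

/-- `DTwice σ π v Λ Λ' m` : twice the tree distance `D(Λ, Λ')` equals `m`
(type-0 vertex lattices are midpoints of edges, contributing `1/2` each). -/
def DTwice (σ : F →+* F) (π : F) (v : F → ℤ) (Λ Λ' : Set (F × F)) (m : ℕ) : Prop :=
  (Λ = Λ' ∧ m = 0) ∨
  (Λ ≠ Λ' ∧ ∃ k : ℕ,
    IsLeast {j : ℕ | ∃ P Q, HullOf σ π v Λ P ∧ HullOf σ π v Λ' Q ∧ WalkN σ π v j P Q} k ∧
    (m : ℤ) = 2 * k + (if IsVertex0 σ v Λ then 1 else 0) +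
      (if IsVertex0 σ v Λ' then 1 else 0))

/-- `g ∈ GL₂(O_F)`. -/
def InGL2O (v : F → ℤ) (g : Matrix (Fin 2) (Fin 2) F) : Prop :=
  (∀ i j, inO v (g i j)) ∧
    ∃ g' : Matrix (Fin 2) (Fin 2) F, (∀ i j, inO v (g' i j)) ∧ g * g' = 1 ∧ g' * g = 1

/-- Equivalence of Hermitian matrices: `T ≈ T'` iff `gᵗ T ḡ = T'` for some `g ∈ GL₂(O_F)`. -/
def HermEquiv (σ : F →+* F) (v : F → ℤ) (T T' : Matrix (Fin 2) (Fin 2) F) : Prop :=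
  ∃ g, InGL2O v g ∧ g.transpose * T * g.map (fun x => σ x) = T'

/-- `u` is a unit of `O_{F₀}`. -/
def IsUnitO₀ (σ : F →+* F) (v : F → ℤ) (u : F) : Prop :=
  σ u = u ∧ u ≠ 0 ∧ v u = 0

/-- `x` is a norm from `F^×`. -/
def IsNorm (σ : F →+* F) (x : F) : Prop := ∃ y : F, y ≠ 0 ∧ x = y * σ y


section Toolkit
set_option linter.unusedSectionVars false

variable {F : Type} [Field F]

/-- Bundled hypotheses on the valued field with involution. -/
structure GV (σ : F →+* F) (π : F) (v : F → ℤ) : Prop where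
  hinv : ∀ x, σ (σ x) = x
  hσπ : σ π = -π
  hπ : π ≠ 0
  hvπ : v π = 1
  hvσ : ∀ x, v (σ x) = v x
  hvmul : ∀ x y : F, x ≠ 0 → y ≠ 0 → v (x * y) = v x + v y
  hvadd : ∀ x y : F, x ≠ 0 → y ≠ 0 → x + y ≠ 0 → min (v x) (v y) ≤ v (x + y)
  heven : ∀ x : F, σ x = x → x ≠ 0 → Even (v x)

/-- `v x ≥ n` (or `x = 0`). -/
def vge (v : F → ℤ) (x : F) (n : ℤ) : Prop := x = 0 ∨ n ≤ v x

namespace GV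

variable {σ : F →+* F} {π : F} {v : F → ℤ} (h : GV σ π v)
include h

lemma v1 : v 1 = 0 := by
  have := h.hvmul 1 1 one_ne_zero one_ne_zero
  simp at this; omega

lemma vneg1 : v (-1 : F) = 0 := by
  have := h.hvmul (-1) (-1) (by norm_num) (by norm_num)
  simp [h.v1] at this; omega

lemma vneg {x : F} (hx : x ≠ 0) : v (-x) = v x := by
  have e : -x = (-1) * x := by ring
  rw [e, h.hvmul _ _ (by norm_num) hx, h.vneg1, zero_add]

lemma vinv {x : F} (hx : x ≠ 0) : v x⁻¹ = - v x := by
  have := h.hvmul x x⁻¹ hx (inv_ne_zero hx)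
  rw [mul_inv_cancel₀ hx, h.v1] at this; omega

lemma vpow (n : ℕ) : v (π ^ n) = n := by
  induction n with
  | zero => simpa using h.v1
  | succ m ih =>
      rw [pow_succ, h.hvmul _ _ (pow_ne_zero _ h.hπ) h.hπ, ih, h.hvπ]
      push_cast; ring

lemma vzpow (n : ℤ) : v (π ^ n) = n := by
  cases n with
  | ofNat m => rw [Int.ofNat_eq_coe, zpow_natCast, h.vpow]
  | negSucc m =>
      rw [zpow_negSucc, h.vinv (pow_ne_zero _ h.hπ), h.vpow]
      simp [Int.negSucc_eq]

lemma σne {x : F} (hx : x ≠ 0) : σ x ≠ 0 := by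
  intro hc
  apply hx
  have : σ (σ x) = σ 0 := by rw [hc, map_zero]
  rwa [h.hinv, map_zero] at this

lemma inO_iff {x : F} : inO v x ↔ vge v x 0 := Iff.rfl

lemma vge_mono {x : F} {n m : ℤ} (hx : vge v x n) (hnm : m ≤ n) : vge v x m := by
  rcases hx with h0 | h1
  · exact Or.inl h0
  · exact Or.inr (le_trans hnm h1)

lemma vge_of_v {x : F} {n : ℤ} (hx : n ≤ v x) : vge v x n := Or.inr hx

lemma vge_zero {n : ℤ} : vge v (0 : F) n := Or.inl rfl

lemma vge_add {x y : F} {n : ℤ} (hx : vge v x n) (hy : vge v y n) : vge v (x + y) n := by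
  rcases hx with h0 | h1
  · simpa [h0] using hy
  · rcases hy with h0' | h1'
    · simpa [h0'] using (h.vge_of_v h1)
    · by_cases hx0 : x = 0
      · simpa [hx0] using (h.vge_of_v h1')
      · by_cases hy0 : y = 0
        · simpa [hy0] using (h.vge_of_v h1)
        · by_cases hxy : x + y = 0
          · exact Or.inl hxy
          · exact Or.inr (le_trans (le_min h1 h1') (h.hvadd x y hx0 hy0 hxy))

lemma vge_neg {x : F} {n : ℤ} (hx : vge v x n) : vge v (-x) n := by
  rcases hx with h0 | h1
  · exact Or.inl (by rw [h0, neg_zero])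
  · by_cases hx0 : x = 0
    · exact Or.inl (by rw [hx0, neg_zero])
    · exact Or.inr (by rwa [h.vneg hx0])

lemma vge_sub {x y : F} {n : ℤ} (hx : vge v x n) (hy : vge v y n) : vge v (x - y) n := by
  rw [sub_eq_add_neg]; exact h.vge_add hx (h.vge_neg hy)

lemma vge_mul {x y : F} {n m : ℤ} (hx : vge v x n) (hy : vge v y m) :
    vge v (x * y) (n + m) := by
  rcases hx with h0 | h1
  · exact Or.inl (by rw [h0, zero_mul])
  · rcases hy with h0' | h1'
    · exact Or.inl (by rw [h0', mul_zero])
    · by_cases hx0 : x = 0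
      · exact Or.inl (by rw [hx0, zero_mul])
      · by_cases hy0 : y = 0
        · exact Or.inl (by rw [hy0, mul_zero])
        · exact Or.inr (by rw [h.hvmul x y hx0 hy0]; omega)

lemma vge_σ {x : F} {n : ℤ} (hx : vge v x n) : vge v (σ x) n := by
  rcases hx with h0 | h1
  · exact Or.inl (by rw [h0, map_zero])
  · exact Or.inr (by rwa [h.hvσ])

/-- Division by an element of exact valuation `m`. -/
lemma vge_div {x y : F} {n m : ℤ} (hxy : vge v (x * y) n) (hy : y ≠ 0) (hvy : v y = m) :
    vge v x (n - m) := by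
  by_cases hx : x = 0
  · exact Or.inl hx
  · rcases hxy with h0 | h1
    · exact absurd h0 (mul_ne_zero hx hy)
    · rw [h.hvmul x y hx hy, hvy] at h1
      exact Or.inr (by omega)

/-- Dominance: adding something of strictly bigger valuation keeps value and nonvanishing. -/
lemma v_add_eq {x y : F} (hx : x ≠ 0) (hy : vge v y (v x + 1)) :
    x + y ≠ 0 ∧ v (x + y) = v x := by
  rcases hy with h0 | h1
  · subst h0; simpa using hx
  · by_cases hy0 : y = 0
    · subst hy0; simpa using hx
    · have hne : x + y ≠ 0 := by
        intro hc
        have hyx : y = -x := by linear_combination hc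
        rw [hyx, h.vneg hx] at h1
        omega
      constructor
      · exact hne
      · have hlow : v x ≤ v (x + y) := by
          have := h.hvadd x y hx hy0 hne
          omega
        by_cases hgt : v x + 1 ≤ v (x + y)
        · exfalso
          have hx2 : x = (x + y) + (-y) := by ring
          have hne2 : (x + y) + (-y) ≠ 0 := by rw [← hx2]; exact hx
          have := h.hvadd (x + y) (-y) hne (neg_ne_zero.mpr hy0) hne2
          rw [← hx2] at this
          rw [h.vneg hy0] at this
          omega
        · omega

end GV
end Toolkit

section Geom
set_option linter.unusedSectionVars false
variable {F : Type} [Field F]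

@[simp] lemma herm_add_left (σ : F →+* F) (x y z : F × F) :
    herm σ (x + y) z = herm σ x z + herm σ y z := by
  simp [herm]; ring

@[simp] lemma herm_smul_left (σ : F →+* F) (a : F) (x y : F × F) :
    herm σ (a • x) y = a * herm σ x y := by
  simp [herm, Prod.smul_fst, Prod.smul_snd, smul_eq_mul]; ring

@[simp] lemma herm_smul_right (σ : F →+* F) (a : F) (x y : F × F) :
    herm σ x (a • y) = σ a * herm σ x y := by
  simp [herm, Prod.smul_fst, Prod.smul_snd, smul_eq_mul, map_mul]; ring

lemma herm_comb_left (σ : F →+* F) (s t : F) (x w y : F × F) :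
    herm σ (s • x + t • w) y = s * herm σ x y + t * herm σ w y := by
  simp

lemma herm_comb_right (σ : F →+* F) (s t : F) (x w y : F × F) :
    herm σ y (s • x + t • w) = σ s * herm σ y x + σ t * herm σ y w := by
  simp [herm, Prod.smul_fst, Prod.smul_snd, smul_eq_mul, map_mul, map_add]; ring

lemma herm_conj {σ : F →+* F} (hinv : ∀ x, σ (σ x) = x) (x y : F × F) :
    herm σ y x = σ (herm σ x y) := by
  simp [herm, map_add, map_mul, hinv]; ring

/-- 2×2 determinant of a pair of vectors. -/
def det2 (x y : F × F) : F := x.1 * y.2 - x.2 * y.1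

lemma det2_combo (x y : F × F) (a b c d : F) :
    det2 (a • x + b • y) (c • x + d • y) = (a * d - b * c) * det2 x y := by
  simp [det2, Prod.smul_fst, Prod.smul_snd, smul_eq_mul]; ring

lemma indep_iff_det2 {x y : F × F} : LinearIndependent F ![x, y] ↔ det2 x y ≠ 0 := by
  rw [LinearIndependent.pair_iff]
  constructor
  · intro H hd
    by_cases hx : x = 0
    · rcases (H 1 0 (by simp [hx])) with ⟨h1, -⟩
      exact one_ne_zero h1
    · have hx1 : x.1 ≠ 0 ∨ x.2 ≠ 0 := by
        by_contra hc
        push_neg at hc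
        exact hx (Prod.ext hc.1 hc.2)
      rcases hx1 with hx1 | hx2
      · have := H (-(y.1 / x.1)) 1 (by
          apply Prod.ext <;>
            simp [Prod.smul_fst, Prod.smul_snd, smul_eq_mul] <;>
            field_simp <;> simp [det2] at hd ⊢ <;> linear_combination hd)
        exact one_ne_zero this.2
      · have := H (-(y.2 / x.2)) 1 (by
          apply Prod.ext <;>
            simp [Prod.smul_fst, Prod.smul_snd, smul_eq_mul] <;>
            field_simp <;> simp [det2] at hd ⊢ <;> linear_combination -hd)
        exact one_ne_zero this.2
  · intro hd s t hst
    have e1 : s * x.1 + t * y.1 = 0 := by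
      have := congrArg Prod.fst hst
      simpa [Prod.smul_fst, smul_eq_mul] using this
    have e2 : s * x.2 + t * y.2 = 0 := by
      have := congrArg Prod.snd hst
      simpa [Prod.smul_snd, smul_eq_mul] using this
    constructor
    · have hs : s * det2 x y = 0 := by
        simp only [det2]; linear_combination y.2 * e1 - y.1 * e2
      exact (mul_eq_zero.mp hs).resolve_right hd
    · have ht : t * det2 x y = 0 := by
        simp only [det2]; linear_combination x.1 * e2 - x.2 * e1
      exact (mul_eq_zero.mp ht).resolve_right hd

lemma exists_coords {x y : F × F} (hd : det2 x y ≠ 0) (z : F × F) :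
    ∃ s t : F, z = s • x + t • y := by
  refine ⟨(z.1 * y.2 - z.2 * y.1) / det2 x y, (x.1 * z.2 - x.2 * z.1) / det2 x y, ?_⟩
  have hd' : det2 x y ≠ 0 := hd
  apply Prod.ext <;>
    simp [Prod.smul_fst, Prod.smul_snd, smul_eq_mul] <;>
    field_simp <;> simp [det2] at hd' ⊢ <;> ring

lemma coords_unique {x y : F × F} (hd : det2 x y ≠ 0) {s t s' t' : F}
    (he : s • x + t • y = s' • x + t' • y) : s = s' ∧ t = t' := by
  have e1 : s * x.1 + t * y.1 = s' * x.1 + t' * y.1 := by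
    have := congrArg Prod.fst he; simpa [Prod.smul_fst, smul_eq_mul] using this
  have e2 : s * x.2 + t * y.2 = s' * x.2 + t' * y.2 := by
    have := congrArg Prod.snd he; simpa [Prod.smul_snd, smul_eq_mul] using this
  constructor
  · have : (s - s') * det2 x y = 0 := by
      simp only [det2]; linear_combination y.2 * e1 - y.1 * e2
    exact sub_eq_zero.mp ((mul_eq_zero.mp this).resolve_right hd)
  · have : (t - t') * det2 x y = 0 := by
      simp only [det2]; linear_combination x.1 * e2 - x.2 * e1
    exact sub_eq_zero.mp ((mul_eq_zero.mp this).resolve_right hd)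

end Geom

section Lat
set_option linter.unusedSectionVars false
variable {F : Type} [Field F] {σ : F →+* F} {π : F} {v : F → ℤ} (h : GV σ π v)
include h

lemma GV.inO_one : inO v (1 : F) := Or.inr (le_of_eq h.v1.symm)

lemma GV.inO_zero : inO v (0 : F) := Or.inl rfl

lemma GV.inO_pi : inO v π := Or.inr (by rw [h.hvπ]; norm_num)

lemma GV.inO_unit {a : F} (hva : v a = 0) : inO v a := Or.inr (le_of_eq hva.symm)

lemma GV.inO_inv_unit {a : F} (ha : a ≠ 0) (hva : v a = 0) : inO v a⁻¹ :=
  Or.inr (le_of_eq (by rw [h.vinv ha, hva, neg_zero]))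

omit h in
lemma mem_spanL {x y z : F × F} :
    z ∈ spanL v x y ↔ ∃ a b : F, inO v a ∧ inO v b ∧ z = a • x + b • y := Iff.rfl

omit h in
lemma mem_spanL_of {x y : F × F} {a b : F} (ha : inO v a) (hb : inO v b) :
    a • x + b • y ∈ spanL v x y := ⟨a, b, ha, hb, rfl⟩

lemma GV.gen_mem_left (x y : F × F) : x ∈ spanL v x y := by
  have := mem_spanL_of (v := v) (x := x) (y := y) h.inO_one h.inO_zero
  simpa using this

lemma GV.gen_mem_right (x y : F × F) : y ∈ spanL v x y := by
  have := mem_spanL_of (v := v) (x := x) (y := y) h.inO_zero h.inO_one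
  simpa using this

lemma GV.spanL_comb {p q z₁ z₂ : F × F} {a b : F} (hz₁ : z₁ ∈ spanL v p q)
    (hz₂ : z₂ ∈ spanL v p q) (ha : inO v a) (hb : inO v b) :
    a • z₁ + b • z₂ ∈ spanL v p q := by
  obtain ⟨a₁, b₁, ha₁, hb₁, rfl⟩ := hz₁
  obtain ⟨a₂, b₂, ha₂, hb₂, rfl⟩ := hz₂
  refine ⟨a * a₁ + b * a₂, a * b₁ + b * b₂, ?_, ?_, ?_⟩
  · exact h.vge_add (by simpa using h.vge_mul ha ha₁) (by simpa using h.vge_mul hb ha₂)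
  · exact h.vge_add (by simpa using h.vge_mul ha hb₁) (by simpa using h.vge_mul hb hb₂)
  · simp only [smul_add, smul_smul, add_smul]; abel

lemma GV.spanL_sub {x y p q : F × F} (hx : x ∈ spanL v p q) (hy : y ∈ spanL v p q) :
    spanL v x y ⊆ spanL v p q := by
  rintro z ⟨a, b, ha, hb, rfl⟩
  exact h.spanL_comb hx hy ha hb

omit h in
lemma coords_mem {x y : F × F} (hd : det2 x y ≠ 0) {a b : F}
    (hz : a • x + b • y ∈ spanL v x y) : inO v a ∧ inO v b := by
  obtain ⟨a', b', ha', hb', he⟩ := hz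
  obtain ⟨rfl, rfl⟩ := coords_unique hd he
  exact ⟨ha', hb'⟩

omit h in
lemma mem_pi_image {Λ : Set (F × F)} (hπ : π ≠ 0) {z : F × F} :
    z ∈ (fun x => π • x) '' Λ ↔ π⁻¹ • z ∈ Λ := by
  constructor
  · rintro ⟨y, hy, rfl⟩
    simpa [smul_smul, inv_mul_cancel₀ hπ] using hy
  · intro hz
    exact ⟨π⁻¹ • z, hz, by simp [smul_smul, mul_inv_cancel₀ hπ]⟩

lemma GV.basis_not_pi {x y : F × F} (hd : det2 x y ≠ 0) :
    x ∉ (fun z => π • z) '' (spanL v x y) := by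
  rw [mem_pi_image h.hπ]
  intro hc
  have hx : π⁻¹ • x = π⁻¹ • x + (0 : F) • y := by simp
  rw [hx] at hc
  have := (coords_mem hd hc).1
  rcases this with h0 | h1
  · exact inv_ne_zero h.hπ h0
  · rw [h.vinv h.hπ, h.hvπ] at h1; omega

/-- Master change-of-basis lemma. -/
lemma GV.spanL_change {x y : F × F} {a b c d : F} (ha : inO v a) (hb : inO v b)
    (hc : inO v c) (hd : inO v d) (hΔ : a * d - b * c ≠ 0) (hvΔ : v (a * d - b * c) = 0) :
    spanL v (a • x + b • y) (c • x + d • y) = spanL v x y := by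
  set Δ := a * d - b * c with hΔdef
  have hΔi : inO v Δ⁻¹ := h.inO_inv_unit hΔ hvΔ
  apply Set.Subset.antisymm
  · exact h.spanL_sub (mem_spanL_of ha hb) (mem_spanL_of hc hd)
  · apply h.spanL_sub
    · have hxid : x = (d * Δ⁻¹) • (a • x + b • y) + (-(b * Δ⁻¹)) • (c • x + d • y) := by
        apply Prod.ext <;>
          simp only [Prod.smul_fst, Prod.smul_snd, Prod.fst_add, Prod.snd_add, smul_eq_mul] <;>
          field_simp <;> ring
      have hm := mem_spanL_of (v := v) (x := a • x + b • y) (y := c • x + d • y)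
        (a := d * Δ⁻¹) (b := -(b * Δ⁻¹))
        (h.inO_iff.mpr (by simpa using h.vge_mul hd hΔi)) (h.vge_neg (by simpa using h.vge_mul hb hΔi))
      rwa [← hxid] at hm
    · have hyid : y = (-(c * Δ⁻¹)) • (a • x + b • y) + (a * Δ⁻¹) • (c • x + d • y) := by
        apply Prod.ext <;>
          simp only [Prod.smul_fst, Prod.smul_snd, Prod.fst_add, Prod.snd_add, smul_eq_mul] <;>
          field_simp <;> ring
      have hm := mem_spanL_of (v := v) (x := a • x + b • y) (y := c • x + d • y)
        (a := -(c * Δ⁻¹)) (b := a * Δ⁻¹)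
        (h.vge_neg (by simpa using h.vge_mul hc hΔi)) (h.inO_iff.mpr (by simpa using h.vge_mul ha hΔi))
      rwa [← hyid] at hm

omit h in
lemma spanL_comm (x y : F × F) : spanL v x y = spanL v y x := by
  ext z
  constructor <;> rintro ⟨a, b, ha, hb, rfl⟩ <;> exact ⟨b, a, hb, ha, add_comm _ _⟩

/-- Extract a basis starting with a given primitive vector. -/
lemma GV.extract {Λ : Set (F × F)} (hlat : IsLattice v Λ) {x : F × F} (hx : x ∈ Λ)
    (hxn : x ∉ (fun z => π • z) '' Λ) : ∃ w, det2 x w ≠ 0 ∧ Λ = spanL v x w := by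
  obtain ⟨u, w₀, hind, rfl⟩ := hlat
  have hdu : det2 u w₀ ≠ 0 := indep_iff_det2.mp hind
  obtain ⟨a, b, ha, hb, rfl⟩ := hx
  rw [mem_pi_image h.hπ] at hxn
  have hsm : π⁻¹ • (a • u + b • w₀) = (π⁻¹ * a) • u + (π⁻¹ * b) • w₀ := by
    simp [smul_add, smul_smul]
  rw [hsm] at hxn
  have hno : ¬ (inO v (π⁻¹ * a) ∧ inO v (π⁻¹ * b)) := fun hc => hxn (mem_spanL_of hc.1 hc.2)
  have hunit : (a ≠ 0 ∧ v a = 0) ∨ (b ≠ 0 ∧ v b = 0) := by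
    by_contra hcon
    push_neg at hcon
    apply hno
    constructor
    · by_cases ha0 : a = 0
      · exact Or.inl (by rw [ha0, mul_zero])
      · rcases ha with h0 | h1
        · exact absurd h0 ha0
        · have hva : v a ≠ 0 := fun hc => (hcon.1 ha0) hc
          exact Or.inr (by rw [h.hvmul _ _ (inv_ne_zero h.hπ) ha0, h.vinv h.hπ, h.hvπ]; omega)
    · by_cases hb0 : b = 0
      · exact Or.inl (by rw [hb0, mul_zero])
      · rcases hb with h0 | h1
        · exact absurd h0 hb0
        · have hvb : v b ≠ 0 := fun hc => (hcon.2 hb0) hc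
          exact Or.inr (by rw [h.hvmul _ _ (inv_ne_zero h.hπ) hb0, h.vinv h.hπ, h.hvπ]; omega)
  rcases hunit with ⟨ha0, hva⟩ | ⟨hb0, hvb⟩
  · refine ⟨w₀, ?_, ?_⟩
    · have : det2 (a • u + b • w₀) w₀ = a * det2 u w₀ := by
        have hw : w₀ = (0:F) • u + (1:F) • w₀ := by simp
        rw [show det2 (a • u + b • w₀) w₀ = det2 (a • u + b • w₀) ((0:F) • u + (1:F) • w₀) by
          rw [← hw], det2_combo]
        ring
      rw [this]
      exact mul_ne_zero ha0 hdu
    · have := h.spanL_change (x := u) (y := w₀) ha hb h.inO_zero h.inO_one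
        (by simpa using ha0) (by simpa using hva)
      simp only [zero_smul, one_smul, zero_add] at this
      exact this.symm
  · refine ⟨u, ?_, ?_⟩
    · have : det2 (a • u + b • w₀) u = (-b) * det2 u w₀ := by
        have hw : u = (1:F) • u + (0:F) • w₀ := by simp
        rw [show det2 (a • u + b • w₀) u = det2 (a • u + b • w₀) ((1:F) • u + (0:F) • w₀) by
          rw [← hw], det2_combo]
        ring
      rw [this]
      exact mul_ne_zero (neg_ne_zero.mpr hb0) hdu
    · have := h.spanL_change (x := w₀) (y := u) (a := b) (b := a) (c := 0) (d := 1)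
        hb ha h.inO_zero h.inO_one (by simpa using hb0) (by simpa using hvb)
      simp only [zero_smul, one_smul, zero_add] at this
      rw [add_comm (a • u) (b • w₀), spanL_comm u w₀]
      exact this.symm

/-- Membership in the dual of a lattice, in terms of the two generators. -/
lemma GV.mem_dual_iff {x y : F × F} (z : F × F) :
    z ∈ dualL σ v (spanL v x y) ↔ inO v (herm σ z x) ∧ inO v (herm σ z y) := by
  constructor
  · intro hz
    exact ⟨hz x (h.gen_mem_left x y), hz y (h.gen_mem_right x y)⟩
  · rintro ⟨h1, h2⟩ z' ⟨a, b, ha, hb, rfl⟩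
    rw [herm_comb_right]
    have := h.vge_add (n := 0)
      (by simpa using h.vge_mul (h.vge_σ ha) h1) (by simpa using h.vge_mul (h.vge_σ hb) h2)
    exact this

end Lat

section Dual
set_option linter.unusedSectionVars false
variable {F : Type} [Field F] {σ : F →+* F} {π : F} {v : F → ℤ} (h : GV σ π v)
include h

omit h in
lemma det2_smul_right (x y : F × F) (a : F) : det2 x (a • y) = a * det2 x y := by
  simp [det2, Prod.smul_fst, Prod.smul_snd, smul_eq_mul]; ring

omit h in
lemma det2_smul_left (x y : F × F) (a : F) : det2 (a • x) y = a * det2 x y := by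
  simp [det2, Prod.smul_fst, Prod.smul_snd, smul_eq_mul]; ring

lemma GV.vge_mul_unit {u B : F} {n m : ℤ} (hu : u ≠ 0) (hvu : v u = m) :
    vge v (u * B) n ↔ vge v B (n - m) := by
  constructor
  · intro hx
    exact h.vge_div (x := B) (y := u) (by rwa [mul_comm] at hx) hu hvu
  · intro hx
    have := h.vge_mul (x := u) (y := B) (Or.inr (le_of_eq hvu.symm)) hx
    have e : m + (n - m) = n := by ring
    rwa [e] at this

lemma GV.v2_pair {Λ : Set (F × F)} (hΛ2 : IsVertex2 σ π v Λ) {z z' : F × F}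
    (hz : z ∈ Λ) (hz' : z' ∈ Λ) : vge v (herm σ z z') (-1) := by
  have hπz : π • z ∈ dualL σ v Λ := by
    rw [hΛ2.2]; exact ⟨z, hz, rfl⟩
  have := hπz z' hz'
  rw [herm_smul_left] at this
  have := (h.vge_mul_unit (u := π) (B := herm σ z z') h.hπ h.hvπ).mp this
  simpa using this

lemma GV.v2_norm {Λ : Set (F × F)} (hΛ2 : IsVertex2 σ π v Λ) {z : F × F}
    (hz : z ∈ Λ) : inO v (herm σ z z) := by
  have h1 := h.v2_pair hΛ2 hz hz
  rcases h1 with h0 | h1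
  · exact Or.inl h0
  · by_cases hz0 : herm σ z z = 0
    · exact Or.inl hz0
    · have hfix : σ (herm σ z z) = herm σ z z := (herm_conj h.hinv z z).symm
      obtain ⟨r, hr⟩ := h.heven _ hfix hz0
      exact Or.inr (by omega)

/-- Standard facts for a basis `x, w` of a type-2 lattice with `q(x)` integral. -/
lemma GV.std {x w : F × F} (hd : det2 x w ≠ 0) (hΛ2 : IsVertex2 σ π v (spanL v x w))
    (hqx : inO v (herm σ x x)) :
    herm σ x w ≠ 0 ∧ v (herm σ x w) = -1 ∧ herm σ w x ≠ 0 ∧ v (herm σ w x) = -1 ∧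
      inO v (herm σ w w) ∧
      (herm σ x x * herm σ w w - herm σ x w * herm σ w x) ≠ 0 ∧
      v (herm σ x x * herm σ w w - herm σ x w * herm σ w x) = -2 := by
  have hxw : vge v (herm σ x w) (-1) :=
    h.v2_pair hΛ2 (h.gen_mem_left x w) (h.gen_mem_right x w)
  have hne : ¬ inO v (herm σ x w) := by
    intro hin
    have hxd : x ∈ dualL σ v (spanL v x w) := (h.mem_dual_iff x).mpr ⟨hqx, hin⟩
    rw [hΛ2.2] at hxd
    exact h.basis_not_pi hd hxd
  have hxw0 : herm σ x w ≠ 0 := by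
    intro hc; exact hne (Or.inl hc)
  have hvxw : v (herm σ x w) = -1 := by
    have hn := not_or.mp hne
    have h2' : v (herm σ x w) < 0 := lt_of_not_ge hn.2
    rcases hxw with h0 | h1
    · exact absurd h0 hxw0
    · omega
  have hwx_eq : herm σ w x = σ (herm σ x w) := herm_conj h.hinv x w
  have hwx0 : herm σ w x ≠ 0 := by rw [hwx_eq]; exact h.σne hxw0
  have hvwx : v (herm σ w x) = -1 := by rw [hwx_eq, h.hvσ]; exact hvxw
  have hqw : inO v (herm σ w w) := h.v2_norm hΛ2 (h.gen_mem_right x w)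
  have hprod : herm σ x w * herm σ w x ≠ 0 := mul_ne_zero hxw0 hwx0
  have hvprod : v (herm σ x w * herm σ w x) = -2 := by
    rw [h.hvmul _ _ hxw0 hwx0, hvxw, hvwx]; norm_num
  have hkey := h.v_add_eq (x := -(herm σ x w * herm σ w x)) (y := herm σ x x * herm σ w w)
    (neg_ne_zero.mpr hprod)
    (by
      rw [h.vneg hprod, hvprod]
      exact h.vge_mono (by simpa using h.vge_mul hqx hqw) (by omega))
  have he : -(herm σ x w * herm σ w x) + herm σ x x * herm σ w w
      = herm σ x x * herm σ w w - herm σ x w * herm σ w x := by ring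
  rw [he, h.vneg hprod, hvprod] at hkey
  exact ⟨hxw0, hvxw, hwx0, hvwx, hqw, hkey.1, hkey.2⟩

omit h in
lemma cramer_s {qx hxw hwx qw s t A B Δ : F} (hA : A = s * qx + t * hwx)
    (hB : B = s * hxw + t * qw) (hΔ : Δ = qx * qw - hxw * hwx) :
    s * Δ = A * qw - B * hwx := by subst hA hB hΔ; ring

omit h in
lemma cramer_t {qx hxw hwx qw s t A B Δ : F} (hA : A = s * qx + t * hwx)
    (hB : B = s * hxw + t * qw) (hΔ : Δ = qx * qw - hxw * hwx) :
    t * Δ = B * qx - A * hxw := by subst hA hB hΔ; ring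

lemma GV.pi_image_spanL (p q : F × F) :
    (fun z => π • z) '' spanL v p q = spanL v (π • p) (π • q) := by
  ext z
  constructor
  · rintro ⟨y, ⟨a, b, ha, hb, rfl⟩, rfl⟩
    exact ⟨a, b, ha, hb, by simp [smul_add, smul_smul, mul_comm]⟩
  · rintro ⟨a, b, ha, hb, rfl⟩
    exact ⟨a • p + b • q, ⟨a, b, ha, hb, rfl⟩, by simp [smul_add, smul_smul, mul_comm]⟩

/-- The self-dual neighbour lattice `N = O x + π Λ`. -/
lemma GV.dual_N {x w : F × F} (hd : det2 x w ≠ 0)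
    (hΛ2 : IsVertex2 σ π v (spanL v x w)) (hqx : inO v (herm σ x x)) :
    IsVertex0 σ v (spanL v x (π • w)) := by
  obtain ⟨hxw0, hvxw, hwx0, hvwx, hqw, hΔ0, hvΔ⟩ := h.std hd hΛ2 hqx
  set qx := herm σ x x
  set qw := herm σ w w
  set Hxw := herm σ x w
  set Hwx := herm σ w x
  set Δ := qx * qw - Hxw * Hwx with hΔdef
  have hdN : det2 x (π • w) ≠ 0 := by
    rw [det2_smul_right]; exact mul_ne_zero h.hπ hd
  constructor
  · exact ⟨x, π • w, indep_iff_det2.mpr hdN, rfl⟩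
  · ext z
    rw [h.mem_dual_iff z]
    constructor
    · rintro ⟨h1, h2⟩
      obtain ⟨s, t, rfl⟩ := exists_coords hd z
      have hA : herm σ (s • x + t • w) x = s * qx + t * Hwx := herm_comb_left σ s t x w x
      have hB : herm σ (s • x + t • w) w = s * Hxw + t * qw := herm_comb_left σ s t x w w
      rw [herm_smul_right, h.hσπ] at h2
      have hB' : vge v (herm σ (s • x + t • w) w) (-1) := by
        have := (h.vge_mul_unit (u := -π) (B := herm σ (s • x + t • w) w)
          (neg_ne_zero.mpr h.hπ) (by rw [h.vneg h.hπ, h.hvπ])).mp h2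
        simpa using this
      have hsΔ : s * Δ = herm σ (s • x + t • w) x * qw - herm σ (s • x + t • w) w * Hwx :=
        cramer_s hA hB hΔdef
      have htΔ : t * Δ = herm σ (s • x + t • w) w * qx - herm σ (s • x + t • w) x * Hxw :=
        cramer_t hA hB hΔdef
      have hs : inO v s := by
        have h1' : vge v (herm σ (s • x + t • w) x * qw) (-2) :=
          h.vge_mono (by simpa using h.vge_mul h1 hqw) (by omega)
        have h2' : vge v (herm σ (s • x + t • w) w * Hwx) (-2) := by
          have := h.vge_mul (n := -1) (m := -1) hB' (Or.inr (le_of_eq hvwx.symm))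
          simpa using this
        have := h.vge_sub h1' h2'
        rw [← hsΔ] at this
        have := h.vge_div this hΔ0 hvΔ
        exact h.inO_iff.mpr (by simpa using this)
      have ht : vge v t 1 := by
        have h1' : vge v (herm σ (s • x + t • w) w * qx) (-1) :=
          h.vge_mono (by simpa using h.vge_mul hB' hqx) (by omega)
        have h2' : vge v (herm σ (s • x + t • w) x * Hxw) (-1) := by
          have := h.vge_mul (n := 0) (m := -1) h1 (Or.inr (le_of_eq hvxw.symm))
          simpa using this
        have := h.vge_sub h1' h2'
        rw [← htΔ] at this
        have := h.vge_div this hΔ0 hvΔ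
        simpa using this
      have hid : t • w = (t * π⁻¹) • (π • w) := by
        rw [smul_smul, mul_assoc, inv_mul_cancel₀ h.hπ, mul_one]
      rw [hid]
      refine mem_spanL_of hs ?_
      have := h.vge_mul (n := 1) (m := -1) ht
        (Or.inr (le_of_eq (by rw [h.vinv h.hπ, h.hvπ])))
      exact h.inO_iff.mpr (by simpa using this)
    · rintro ⟨a, b, ha, hb, rfl⟩
      have e1 : herm σ (a • x + b • (π • w)) x = a * qx + π * (b * Hwx) := by
        simp only [herm_comb_left, herm_smul_left]; ring
      have e2 : herm σ (a • x + b • (π • w)) (π • w)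
          = (-π) * (a * Hxw) + ((-π) * π) * (b * qw) := by
        simp only [herm_comb_left, herm_smul_left, herm_smul_right, h.hσπ]; ring
      constructor
      · rw [e1]
        refine h.vge_add (by simpa using h.vge_mul ha hqx) ?_
        have h0 : vge v (b * Hwx) (-1) := by
          have := h.vge_mul (n := 0) (m := -1) hb (Or.inr (le_of_eq hvwx.symm))
          exact h.vge_mono this (by omega)
        have := h.vge_mul (n := 1) (m := -1) (Or.inr (le_of_eq h.hvπ.symm)) h0
        exact h.vge_mono this (by omega)
      · rw [e2]
        refine h.vge_add ?_ ?_
        · have h0 : vge v (a * Hxw) (-1) := by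
            have := h.vge_mul (n := 0) (m := -1) ha (Or.inr (le_of_eq hvxw.symm))
            exact h.vge_mono this (by omega)
          have := h.vge_mul (n := 1) (m := -1)
            (Or.inr (le_of_eq (by rw [h.vneg h.hπ, h.hvπ]))) h0
          exact h.vge_mono this (by omega)
        · have hv2 : vge v ((-π) * π) 2 := by
            have := h.vge_mul (n := 1) (m := 1)
              (Or.inr (le_of_eq (by rw [h.vneg h.hπ, h.hvπ]))) (Or.inr (le_of_eq h.hvπ.symm))
            exact h.vge_mono this (by omega)
          have h0 : vge v (b * qw) 0 := by
            have := h.vge_mul (n := 0) (m := 0) hb hqw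
            exact h.vge_mono this (by omega)
          have := h.vge_mul (n := 2) (m := 0) hv2 h0
          exact h.vge_mono this (by omega)

end Dual

section Dual2
set_option linter.unusedSectionVars false
variable {F : Type} [Field F] {σ : F →+* F} {π : F} {v : F → ℤ} (h : GV σ π v)
include h

lemma GV.exact_vge {x : F} {n : ℤ} (hx : v x = n) : vge v x n := Or.inr (le_of_eq hx.symm)

lemma GV.vπinv : v π⁻¹ = -1 := by rw [h.vinv h.hπ, h.hvπ]

lemma GV.vnegπ : v (-π) = 1 := by rw [h.vneg h.hπ, h.hvπ]

lemma GV.dual_L1 {x w : F × F} (hd : det2 x w ≠ 0)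
    (hΛ2 : IsVertex2 σ π v (spanL v x w)) (hqx2 : vge v (herm σ x x) 2) :
    IsVertex2 σ π v (spanL v (π⁻¹ • x) (π • w)) := by
  have hqx : inO v (herm σ x x) := h.vge_mono hqx2 (by omega)
  obtain ⟨hxw0, hvxw, hwx0, hvwx, hqw, hΔ0, hvΔ⟩ := h.std hd hΛ2 hqx
  set qx := herm σ x x
  set qw := herm σ w w
  set Hxw := herm σ x w
  set Hwx := herm σ w x
  set Δ := qx * qw - Hxw * Hwx with hΔdef
  have hd1 : det2 (π⁻¹ • x) (π • w) ≠ 0 := by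
    rw [det2_smul_left, det2_smul_right]
    exact mul_ne_zero (inv_ne_zero h.hπ) (mul_ne_zero h.hπ hd)
  have himg : (fun z => π • z) '' spanL v (π⁻¹ • x) (π • w) = spanL v x ((π * π) • w) := by
    rw [h.pi_image_spanL, smul_smul, mul_inv_cancel₀ h.hπ, one_smul, smul_smul]
  constructor
  · exact ⟨π⁻¹ • x, π • w, indep_iff_det2.mpr hd1, rfl⟩
  · rw [himg]
    ext z
    rw [h.mem_dual_iff z]
    have hmx : herm σ z (π⁻¹ • x) = (-π)⁻¹ * herm σ z x := by
      rw [herm_smul_right, map_inv₀, h.hσπ]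
    have hmw : herm σ z (π • w) = -π * herm σ z w := by
      rw [herm_smul_right, h.hσπ]
    have hvnegπinv : v (-π)⁻¹ = -1 := by
      rw [h.vinv (neg_ne_zero.mpr h.hπ), h.vnegπ]
    constructor
    · rintro ⟨h1, h2⟩
      rw [hmx] at h1
      rw [hmw] at h2
      have hA : vge v (herm σ z x) 1 := by
        have := (h.vge_mul_unit (u := (-π)⁻¹) (B := herm σ z x)
          (inv_ne_zero (neg_ne_zero.mpr h.hπ)) hvnegπinv).mp h1
        exact h.vge_mono this (by omega)
      have hB : vge v (herm σ z w) (-1) := by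
        have := (h.vge_mul_unit (u := -π) (B := herm σ z w)
          (neg_ne_zero.mpr h.hπ) h.vnegπ).mp h2
        exact h.vge_mono this (by omega)
      obtain ⟨s, t, rfl⟩ := exists_coords hd z
      have hAe : herm σ (s • x + t • w) x = s * qx + t * Hwx := herm_comb_left σ s t x w x
      have hBe : herm σ (s • x + t • w) w = s * Hxw + t * qw := herm_comb_left σ s t x w w
      have hsΔ : s * Δ = herm σ (s • x + t • w) x * qw - herm σ (s • x + t • w) w * Hwx :=
        cramer_s hAe hBe hΔdef
      have htΔ : t * Δ = herm σ (s • x + t • w) w * qx - herm σ (s • x + t • w) x * Hxw :=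
        cramer_t hAe hBe hΔdef
      have hs : inO v s := by
        have h1' : vge v (herm σ (s • x + t • w) x * qw) (-2) := by
          have := h.vge_mul (n := 1) (m := 0) hA hqw
          exact h.vge_mono this (by omega)
        have h2' : vge v (herm σ (s • x + t • w) w * Hwx) (-2) := by
          have := h.vge_mul (n := -1) (m := -1) hB (h.exact_vge hvwx)
          exact h.vge_mono this (by omega)
        have := h.vge_sub h1' h2'
        rw [← hsΔ] at this
        have := h.vge_div this hΔ0 hvΔ
        exact h.inO_iff.mpr (by simpa using this)
      have ht : vge v t 2 := by
        have h1' : vge v (herm σ (s • x + t • w) w * qx) 0 := by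
          have := h.vge_mul (n := -1) (m := 2) hB hqx2
          exact h.vge_mono this (by omega)
        have h2' : vge v (herm σ (s • x + t • w) x * Hxw) 0 := by
          have := h.vge_mul (n := 1) (m := -1) hA (h.exact_vge hvxw)
          exact h.vge_mono this (by omega)
        have := h.vge_sub h1' h2'
        rw [← htΔ] at this
        have := h.vge_div this hΔ0 hvΔ
        exact h.vge_mono this (by omega)
      have hππ : (π * π) ≠ 0 := mul_ne_zero h.hπ h.hπ
      have hid : t • w = (t * (π * π)⁻¹) • ((π * π) • w) := by
        rw [smul_smul, mul_assoc, inv_mul_cancel₀ hππ, mul_one]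
      rw [hid]
      refine mem_spanL_of hs ?_
      have hvinv : v (π * π)⁻¹ = -2 := by
        rw [h.vinv hππ, h.hvmul _ _ h.hπ h.hπ, h.hvπ]; norm_num
      have := h.vge_mul (n := 2) (m := -2) ht (h.exact_vge hvinv)
      exact h.vge_mono this (by omega)
    · rintro ⟨a, b, ha, hb, rfl⟩
      have hvππ : v (π * π) = 2 := by rw [h.hvmul _ _ h.hπ h.hπ, h.hvπ]; norm_num
      have e1 : herm σ (a • x + b • ((π * π) • w)) x = a * qx + (π * π) * (b * Hwx) := by
        simp only [herm_comb_left, herm_smul_left]; ring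
      have e2 : herm σ (a • x + b • ((π * π) • w)) w = a * Hxw + (π * π) * (b * qw) := by
        simp only [herm_comb_left, herm_smul_left]; ring
      constructor
      · rw [hmx, e1]
        have hp1 : vge v (a * qx) 1 := by
          have := h.vge_mul (n := 0) (m := 2) ha hqx2
          exact h.vge_mono this (by omega)
        have hp2 : vge v ((π * π) * (b * Hwx)) 1 := by
          have hin : vge v (b * Hwx) (-1) := by
            have := h.vge_mul (n := 0) (m := -1) hb (h.exact_vge hvwx)
            exact h.vge_mono this (by omega)
          have := h.vge_mul (n := 2) (m := -1) (h.exact_vge hvππ) hin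
          exact h.vge_mono this (by omega)
        have hsum := h.vge_add hp1 hp2
        have := h.vge_mul (n := -1) (m := 1) (h.exact_vge hvnegπinv) hsum
        exact h.vge_mono this (by omega)
      · rw [hmw, e2]
        have hp1 : vge v (a * Hxw) (-1) := by
          have := h.vge_mul (n := 0) (m := -1) ha (h.exact_vge hvxw)
          exact h.vge_mono this (by omega)
        have hp2 : vge v ((π * π) * (b * qw)) (-1) := by
          have hin : vge v (b * qw) 0 := by
            have := h.vge_mul (n := 0) (m := 0) hb hqw
            exact h.vge_mono this (by omega)
          have := h.vge_mul (n := 2) (m := 0) (h.exact_vge hvππ) hin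
          exact h.vge_mono this (by omega)
        have hsum := h.vge_add hp1 hp2
        have := h.vge_mul (n := 1) (m := -1) (h.exact_vge h.vnegπ) hsum
        exact h.vge_mono this (by omega)

end Dual2

section Step
set_option linter.unusedSectionVars false
variable {F : Type} [Field F] {σ : F →+* F} {π : F} {v : F → ℤ} (h : GV σ π v)
include h

lemma GV.not_inO_piinv : ¬ inO v (π⁻¹ : F) := by
  rintro (h0 | h1)
  · exact inv_ne_zero h.hπ h0
  · rw [h.vπinv] at h1; omega

lemma GV.stepcon {x w : F × F} (hd : det2 x w ≠ 0) (hΛ2 : IsVertex2 σ π v (spanL v x w))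
    (hqx2 : vge v (herm σ x x) 2) :
    AdjV σ π v (spanL v x w) (spanL v (π⁻¹ • x) (π • w)) := by
  have hqx : inO v (herm σ x x) := h.vge_mono hqx2 (by omega)
  have hL1 := h.dual_L1 hd hΛ2 hqx2
  have hxmem : x ∈ spanL v (π⁻¹ • x) (π • w) := by
    have := mem_spanL_of (v := v) (x := π⁻¹ • x) (y := π • w) h.inO_pi h.inO_zero
    simpa [smul_smul, mul_inv_cancel₀ h.hπ] using this
  have hπw : π • w ∈ spanL v x w := by
    have := mem_spanL_of (v := v) (x := x) (y := w) h.inO_zero h.inO_pi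
    simpa using this
  have hNsub : spanL v x (π • w) ⊆ spanL v x w ∩ spanL v (π⁻¹ • x) (π • w) := by
    intro z hz
    constructor
    · exact h.spanL_sub (h.gen_mem_left x w) hπw hz
    · exact h.spanL_sub hxmem (h.gen_mem_right _ _) hz
  have hNsup : spanL v x w ∩ spanL v (π⁻¹ • x) (π • w) ⊆ spanL v x (π • w) := by
    rintro z ⟨⟨s, t, hs, ht, rfl⟩, ⟨a, b, ha, hb, he⟩⟩
    have he' : s • x + t • w = (a * π⁻¹) • x + (b * π) • w := by
      rw [he, smul_smul, smul_smul]
    obtain ⟨hs', ht'⟩ := coords_unique hd he'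
    have : s • x + t • w = s • x + b • (π • w) := by
      rw [ht', smul_smul, mul_comm]
    rw [this]
    exact mem_spanL_of hs hb
  have hNeq : spanL v x w ∩ spanL v (π⁻¹ • x) (π • w) = spanL v x (π • w) :=
    Set.Subset.antisymm hNsup hNsub
  have hne : spanL v x w ≠ spanL v (π⁻¹ • x) (π • w) := by
    intro hc
    have hmem : π⁻¹ • x ∈ spanL v x w := by
      rw [hc]; exact h.gen_mem_left _ _
    have hrep : π⁻¹ • x = π⁻¹ • x + (0 : F) • w := by simp
    rw [hrep] at hmem
    exact h.not_inO_piinv (coords_mem hd hmem).1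
  refine ⟨hΛ2, hL1, hne, ?_⟩
  rw [hNeq]
  exact h.dual_N hd hΛ2 hqx

lemma GV.self_dual_pairs {Λ : Set (F × F)} (hΛ0 : IsVertex0 σ v Λ) {z z' : F × F}
    (hz : z ∈ Λ) (hz' : z' ∈ Λ) : inO v (herm σ z z') := by
  rw [← hΛ0.2] at hz
  exact hz z' hz'

omit h in
lemma herm_zero_vec (σ : F →+* F) (y : F × F) : herm σ 0 y = 0 := by simp [herm]

/-- Gram–Schmidt: orthogonal basis of a self-dual lattice through a primitive unit vector. -/
lemma GV.gs {P : Set (F × F)} (hP : IsVertex0 σ v P) {c : F × F} (hc : c ∈ P)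
    (hcn : c ∉ (fun z => π • z) '' P) (hqc0 : herm σ c c ≠ 0) (hvqc : v (herm σ c c) = 0) :
    ∃ d, P = spanL v c d ∧ det2 c d ≠ 0 ∧ herm σ d c = 0 ∧
      herm σ d d ≠ 0 ∧ v (herm σ d d) = 0 := by
  obtain ⟨w₁, hdet1, hPe⟩ := h.extract hP.1 hc hcn
  have hw₁ : w₁ ∈ P := by rw [hPe]; exact h.gen_mem_right _ _
  set a := herm σ w₁ c / herm σ c c with ha_def
  have hHw : inO v (herm σ w₁ c) := h.self_dual_pairs hP hw₁ hc
  have hqcinv : v (herm σ c c)⁻¹ = 0 := by rw [h.vinv hqc0, hvqc]; norm_num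
  have ha : inO v a := by
    rw [ha_def, div_eq_mul_inv]
    have := h.vge_mul (n := 0) (m := 0) hHw (h.exact_vge hqcinv)
    exact h.vge_mono this (by omega)
  set d := (-a) • c + (1 : F) • w₁ with hd_def
  have hdc : herm σ d c = 0 := by
    rw [hd_def, herm_comb_left, ha_def]
    field_simp
    ring
  have hdet : det2 c d ≠ 0 := by
    have : det2 c d = det2 c w₁ := by
      rw [hd_def]
      simp [det2, Prod.smul_fst, Prod.smul_snd, Prod.fst_add, Prod.snd_add, smul_eq_mul]
      ring
    rw [this]; exact hdet1
  have hdmem : d ∈ spanL v c w₁ := by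
    rw [hd_def]; exact mem_spanL_of (h.vge_neg ha) h.inO_one
  have hwmem : w₁ ∈ spanL v c d := by
    have hrep : w₁ = a • c + (1 : F) • d := by
      rw [hd_def]
      apply Prod.ext <;>
        simp [Prod.smul_fst, Prod.smul_snd, Prod.fst_add, Prod.snd_add, smul_eq_mul] <;> ring
    rw [hrep]
    exact mem_spanL_of ha h.inO_one
  have hspan : spanL v c w₁ = spanL v c d :=
    Set.Subset.antisymm (h.spanL_sub (h.gen_mem_left _ _) hwmem)
      (h.spanL_sub (h.gen_mem_left _ _) hdmem)
  have hPd : P = spanL v c d := hPe.trans hspan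
  have hdP : d ∈ P := by rw [hPd]; exact h.gen_mem_right _ _
  have hqd_inO : inO v (herm σ d d) := h.self_dual_pairs hP hdP hdP
  have hqd0 : herm σ d d ≠ 0 := by
    intro hq0
    have hall : ∀ z : F × F, herm σ d z = 0 := by
      intro z
      obtain ⟨s, t, rfl⟩ := exists_coords hdet z
      rw [herm_comb_right, hdc, hq0]; ring
    have h10 := hall ((1 : F), (0 : F))
    have h01 := hall ((0 : F), (1 : F))
    simp [herm] at h10 h01
    have hd0 : d = 0 := Prod.ext h01 h10
    rw [hd0] at hdet
    simp [det2] at hdet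
  have hvqd : v (herm σ d d) = 0 := by
    rcases hqd_inO with h0 | h1
    · exact absurd h0 hqd0
    · by_contra hne0
      have hge1 : 1 ≤ v (herm σ d d) := by omega
      set y := (herm σ d d)⁻¹ • d with hy_def
      have hy_dual : y ∈ dualL σ v P := by
        rw [hPd, h.mem_dual_iff]
        constructor
        · rw [hy_def, herm_smul_left, hdc, mul_zero]; exact h.inO_zero
        · rw [hy_def, herm_smul_left, inv_mul_cancel₀ hqd0]; exact h.inO_one
      rw [hP.2, hPd] at hy_dual
      have hrep : y = (0 : F) • c + (herm σ d d)⁻¹ • d := by rw [hy_def]; simp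
      rw [hrep] at hy_dual
      have := (coords_mem hdet hy_dual).2
      rcases this with h0' | h1'
      · exact inv_ne_zero hqd0 h0'
      · rw [h.vinv hqd0] at h1'; omega
  exact ⟨d, hPd, hdet, hdc, hqd0, hvqd⟩

/-- Uniqueness of the self-dual lattice containing a primitive unit-norm vector. -/
lemma GV.selfdual_unique {P Q : Set (F × F)} (hP : IsVertex0 σ v P) (hQ : IsVertex0 σ v Q)
    {c : F × F} (hcP : c ∈ P) (hcnP : c ∉ (fun z => π • z) '' P)
    (hcQ : c ∈ Q) (hcnQ : c ∉ (fun z => π • z) '' Q)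
    (hqc0 : herm σ c c ≠ 0) (hvqc : v (herm σ c c) = 0) : P = Q := by
  obtain ⟨d, hPd, hdetP, hdcP, hqdP, hvqdP⟩ := h.gs hP hcP hcnP hqc0 hvqc
  obtain ⟨e, hQe, hdetQ, hdcQ, hqdQ, hvqdQ⟩ := h.gs hQ hcQ hcnQ hqc0 hvqc
  have hc0 : c ≠ 0 := by
    intro hc0; rw [hc0] at hqc0; exact hqc0 (herm_zero_vec σ 0)
  have hd0 : d ≠ 0 := by
    intro h0; rw [h0] at hqdP; exact hqdP (herm_zero_vec σ 0)
  have he0 : e ≠ 0 := by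
    intro h0; rw [h0] at hqdQ; exact hqdQ (herm_zero_vec σ 0)
  -- orthogonality equations
  have E1 : d.1 * σ c.2 + d.2 * σ c.1 = 0 := hdcP
  have E2 : e.1 * σ c.2 + e.2 * σ c.1 = 0 := hdcQ
  have hdet_de : det2 e d = 0 := by
    have hcc : c.1 ≠ 0 ∨ c.2 ≠ 0 := by
      by_contra hcon; push_neg at hcon
      exact hc0 (Prod.ext hcon.1 hcon.2)
    rcases hcc with h1 | h2
    · have hσ1 : σ c.1 ≠ 0 := h.σne h1
      have : det2 e d * σ c.1 = 0 := by
        simp only [det2]; linear_combination e.1 * E1 - d.1 * E2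
      exact (mul_eq_zero.mp this).resolve_right hσ1
    · have hσ2 : σ c.2 ≠ 0 := h.σne h2
      have : det2 e d * σ c.2 = 0 := by
        simp only [det2]; linear_combination d.2 * E2 - e.2 * E1
      exact (mul_eq_zero.mp this).resolve_right hσ2
  have hex : ∃ s : F, e = s • d := by
    have hdd : d.1 ≠ 0 ∨ d.2 ≠ 0 := by
      by_contra hcon; push_neg at hcon
      exact hd0 (Prod.ext hcon.1 hcon.2)
    rcases hdd with h1 | h2
    · refine ⟨e.1 / d.1, Prod.ext (by rw [Prod.smul_fst, smul_eq_mul, div_mul_cancel₀ _ h1]) ?_⟩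
      simp only [Prod.smul_snd, smul_eq_mul]
      field_simp
      simp only [det2] at hdet_de
      linear_combination -hdet_de
    · refine ⟨e.2 / d.2, Prod.ext ?_ (by rw [Prod.smul_snd, smul_eq_mul, div_mul_cancel₀ _ h2])⟩
      simp only [Prod.smul_fst, smul_eq_mul]
      field_simp
      simp only [det2] at hdet_de
      linear_combination hdet_de
  obtain ⟨s, rfl⟩ := hex
  have hs0 : s ≠ 0 := by
    intro h0; rw [h0, zero_smul] at he0; exact he0 rfl
  have hqe : herm σ (s • d) (s • d) = s * σ s * herm σ d d := by
    rw [herm_smul_left, herm_smul_right]; ring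
  have hvs : v s = 0 := by
    have := congrArg v hqe
    rw [hvqdQ] at this
    have hσs : σ s ≠ 0 := h.σne hs0
    rw [h.hvmul _ _ (mul_ne_zero hs0 hσs) hqdP, h.hvmul _ _ hs0 hσs, h.hvσ, hvqdP] at this
    omega
  rw [hPd, hQe]
  apply Set.Subset.antisymm
  · apply h.spanL_sub (h.gen_mem_left _ _)
    have hthis : d = (0 : F) • c + s⁻¹ • (s • d) := by
      simp [smul_smul, inv_mul_cancel₀ hs0]
    have hm := mem_spanL_of (v := v) (x := c) (y := s • d)
      (a := (0 : F)) (b := s⁻¹) h.inO_zero (h.inO_inv_unit hs0 hvs)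
    rwa [← hthis] at hm
  · apply h.spanL_sub (h.gen_mem_left _ _)
    have hthis : s • d = (0 : F) • c + s • d := by simp
    have hm := mem_spanL_of (v := v) (x := c) (y := d)
      (a := (0 : F)) (b := s) h.inO_zero (h.inO_unit hvs)
    rwa [← hthis] at hm

end Step

section Walk
set_option linter.unusedSectionVars false
variable {F : Type} [Field F] {σ : F →+* F} {π : F} {v : F → ℤ} (h : GV σ π v)
include h

omit h in
lemma GV.adj_pi_sub {Λ Λ' : Set (F × F)} (hadj : AdjV σ π v Λ Λ') :
    ∀ z ∈ Λ', π • z ∈ Λ := by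
  obtain ⟨h2, h2', hne, h0⟩ := hadj
  intro z hz
  have hdual : π • z ∈ dualL σ v Λ' := by
    rw [h2'.2]; exact ⟨z, hz, rfl⟩
  have hdual2 : π • z ∈ dualL σ v (Λ ∩ Λ') := fun y hy => hdual y hy.2
  rw [h0.2] at hdual2
  exact hdual2.1

omit h in
lemma GV.walk_smul {n : ℕ} {Λ T : Set (F × F)} (hw : WalkN σ π v n Λ T) :
    ∀ z ∈ T, (π ^ n) • z ∈ Λ := by
  induction n generalizing Λ with
  | zero =>
      obtain ⟨f, hf0, hfk, -⟩ := hw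
      intro z hz
      rw [pow_zero, one_smul]
      rw [← hf0, hfk]
      exact hz
  | succ n ihn =>
      obtain ⟨f, hf0, hfk, hadj⟩ := hw
      intro z hz
      have htail : WalkN σ π v n (f 1) T :=
        ⟨fun i => f (i + 1), rfl, hfk, fun i hi => hadj (i + 1) (by omega)⟩
      have hz1 : (π ^ n) • z ∈ f 1 := ihn htail z hz
      have := GV.adj_pi_sub (hadj 0 (by omega)) _ hz1
      rw [hf0] at this
      rwa [pow_succ, mul_comm, mul_smul]
  
omit h in
lemma GV.walk_zero {Λ M : Set (F × F)} (hMeq : Λ = M) : WalkN σ π v 0 Λ M :=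
  ⟨fun _ => Λ, rfl, hMeq, fun i hi => absurd hi (by omega)⟩

omit h in
lemma GV.walk_prepend {Λ Λ₁ T : Set (F × F)} {n : ℕ} (hadj : AdjV σ π v Λ Λ₁)
    (hw : WalkN σ π v n Λ₁ T) : WalkN σ π v (n + 1) Λ T := by
  obtain ⟨f, hf0, hfk, hadjf⟩ := hw
  refine ⟨fun i => if i = 0 then Λ else f (i - 1), by simp, by simp [hfk], ?_⟩
  intro i hi
  match i with
  | 0 => simpa [hf0] using hadj
  | (m + 1) =>
      have : m < n := by omega
      simpa using hadjf m this

lemma GV.vpow_gen {u : F} (hu : u ≠ 0) (hvu : v u = 1) (n : ℕ) : v (u ^ n) = n := by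
  induction n with
  | zero => simpa using h.v1
  | succ m ih =>
      rw [pow_succ, h.hvmul _ _ (pow_ne_zero _ hu) hu, ih, hvu]
      push_cast; ring

/-- The key induction: a type-2 lattice containing `π^j • c` is within distance `j`
of `M` or `M'`. -/
lemma GV.key {c : F × F} (hqc0 : herm σ c c ≠ 0) (hvqc : v (herm σ c c) = 0)
    {Λb M M' : Set (F × F)} (hΛb : IsVertex0 σ v Λb) (hcin : c ∈ Λb)
    (hcout : c ∉ (fun z => π • z) '' Λb)
    (honly : ∀ P : Set (F × F), IsVertex2 σ π v P → Λb ⊆ P → P = M ∨ P = M') :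
    ∀ j : ℕ, ∀ Λ : Set (F × F), IsVertex2 σ π v Λ → (π ^ j) • c ∈ Λ →
      ∃ l : ℕ, l ≤ j ∧ (WalkN σ π v l Λ M ∨ WalkN σ π v l Λ M') := by
  have hc0 : c ≠ 0 := by
    intro hc; rw [hc] at hqc0; exact hqc0 (herm_zero_vec σ 0)
  intro j
  induction j with
  | zero =>
      intro Λ hΛ2 hmem
      rw [pow_zero, one_smul] at hmem
      -- `c` is primitive in `Λ`
      have hcn : c ∉ (fun z => π • z) '' Λ := by
        intro hcontra
        rw [mem_pi_image h.hπ] at hcontra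
        have hvp := h.v2_pair hΛ2 hcontra hcontra
        have he : herm σ (π⁻¹ • c) (π⁻¹ • c) = π⁻¹ * (σ π⁻¹ * herm σ c c) := by
          rw [herm_smul_left, herm_smul_right]
        have hσπi : σ π⁻¹ = (-π)⁻¹ := by rw [map_inv₀, h.hσπ]
        have hne : herm σ (π⁻¹ • c) (π⁻¹ • c) ≠ 0 := by
          rw [he, hσπi]
          exact mul_ne_zero (inv_ne_zero h.hπ)
            (mul_ne_zero (inv_ne_zero (neg_ne_zero.mpr h.hπ)) hqc0)
        have hval : v (herm σ (π⁻¹ • c) (π⁻¹ • c)) = -2 := by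
          rw [he, hσπi,
            h.hvmul _ _ (inv_ne_zero h.hπ)
              (mul_ne_zero (inv_ne_zero (neg_ne_zero.mpr h.hπ)) hqc0),
            h.hvmul _ _ (inv_ne_zero (neg_ne_zero.mpr h.hπ)) hqc0,
            h.vπinv, h.vinv (neg_ne_zero.mpr h.hπ), h.vnegπ, hvqc]
          norm_num
        rcases hvp with h0 | h1
        · exact hne h0
        · rw [hval] at h1; omega
      obtain ⟨w, hdet, hΛe⟩ := h.extract hΛ2.1 hmem hcn
      rw [hΛe] at hΛ2 ⊢
      have hN0 : IsVertex0 σ v (spanL v c (π • w)) :=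
        h.dual_N hdet hΛ2 (h.inO_unit hvqc)
      have hcN : c ∈ spanL v c (π • w) := h.gen_mem_left _ _
      have hcnN : c ∉ (fun z => π • z) '' spanL v c (π • w) := by
        apply h.basis_not_pi
        rw [det2_smul_right]
        exact mul_ne_zero h.hπ hdet
      have hNb : spanL v c (π • w) = Λb :=
        h.selfdual_unique hN0 hΛb hcN hcnN hcin hcout hqc0 hvqc
      have hsub : Λb ⊆ spanL v c w := by
        rw [← hNb]
        apply h.spanL_sub (h.gen_mem_left _ _)
        have hm := mem_spanL_of (v := v) (x := c) (y := w)
          (a := (0 : F)) (b := π) h.inO_zero h.inO_pi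
        simpa using hm
      rcases honly _ hΛ2 hsub with hMeq | hMeq
      · exact ⟨0, le_refl 0, Or.inl (GV.walk_zero hMeq)⟩
      · exact ⟨0, le_refl 0, Or.inr (GV.walk_zero hMeq)⟩
  | succ j ih =>
      intro Λ hΛ2 hmem
      by_cases hj : (π ^ j) • c ∈ Λ
      · obtain ⟨l, hl, hw⟩ := ih Λ hΛ2 hj
        exact ⟨l, by omega, hw⟩
      · set x := (π ^ (j + 1)) • c with hx_def
        have hxn : x ∉ (fun z => π • z) '' Λ := by
          rw [mem_pi_image h.hπ]
          intro hcontra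
          apply hj
          have he : π⁻¹ • x = (π ^ j) • c := by
            rw [hx_def, smul_smul, pow_succ', ← mul_assoc, inv_mul_cancel₀ h.hπ, one_mul]
          rwa [he] at hcontra
        obtain ⟨w, hdet, hΛe⟩ := h.extract hΛ2.1 hmem hxn
        have hqx2 : vge v (herm σ x x) 2 := by
          have he : herm σ x x = (π ^ (j + 1)) * (σ (π ^ (j + 1)) * herm σ c c) := by
            rw [hx_def, herm_smul_left, herm_smul_right]
          have hp0 : (π : F) ^ (j + 1) ≠ 0 := pow_ne_zero _ h.hπ
          have hσp0 : σ (π ^ (j + 1)) ≠ 0 := h.σne hp0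
          have hval : v (herm σ x x) = 2 * (j + 1) := by
            rw [he, h.hvmul _ _ hp0 (mul_ne_zero hσp0 hqc0),
              h.hvmul _ _ hσp0 hqc0, h.hvσ, h.vpow, hvqc]
            push_cast; ring
          exact Or.inr (by rw [hval]; push_cast; omega)
        rw [hΛe] at hΛ2
        have hadj := h.stepcon hdet hΛ2 hqx2
        have hL1v2 : IsVertex2 σ π v (spanL v (π⁻¹ • x) (π • w)) := hadj.2.1
        have hmem1 : (π ^ j) • c ∈ spanL v (π⁻¹ • x) (π • w) := by
          have he : π⁻¹ • x = (π ^ j) • c := by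
            rw [hx_def, smul_smul, pow_succ', ← mul_assoc, inv_mul_cancel₀ h.hπ, one_mul]
          rw [← he]
          exact h.gen_mem_left (π⁻¹ • x) (π • w)
        obtain ⟨l, hl, hw⟩ := ih _ hL1v2 hmem1
        rw [hΛe]
        rcases hw with hw | hw
        · exact ⟨l + 1, by omega, Or.inl (GV.walk_prepend hadj hw)⟩
        · exact ⟨l + 1, by omega, Or.inr (GV.walk_prepend hadj hw)⟩

end Walk

theorem statement5
    (σ : F →+* F) (π : F) (v : F → ℤ)
    (hinv : ∀ x, σ (σ x) = x)
    (hσπ : σ π = -π)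
    (hπ : π ≠ 0)
    (h2 : (2 : F) ≠ 0)
    (hvπ : v π = 1)
    (hv2 : v (2 : F) = 0)
    (hvσ : ∀ x, v (σ x) = v x)
    (hvmul : ∀ x y : F, x ≠ 0 → y ≠ 0 → v (x * y) = v x + v y)
    (hvadd : ∀ x y : F, x ≠ 0 → y ≠ 0 → x + y ≠ 0 → min (v x) (v y) ≤ v (x + y))
    (heven : ∀ x : F, σ x = x → x ≠ 0 → Even (v x))
    (b : F × F) (hb : herm σ b b ≠ 0)
    (α : ℤ) (hα : v (herm σ b b) = 2 * α)
    (Λb : Set (F × F)) (hΛb : IsVertex0 σ v Λb)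
    (hbin : (π ^ (-α)) • b ∈ Λb) (hbout : (π ^ (-α)) • b ∉ (fun x => π • x) '' Λb)
    (M M' : Set (F × F)) (hM : IsVertex2 σ π v M) (hM' : IsVertex2 σ π v M')
    (hMc : Λb ⊆ M) (hM'c : Λb ⊆ M') (hMM : M ≠ M')
    (honly : ∀ P : Set (F × F), IsVertex2 σ π v P → Λb ⊆ P → P = M ∨ P = M')
    (Λ : Set (F × F)) (hΛ : IsVertex2 σ π v Λ)
    (k k' : ℕ) (hk : dGIs σ π v Λ M k) (hk' : dGIs σ π v Λ M' k') :
    nIs π b Λ (α - min (k : ℤ) (k' : ℤ)) := by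
  have h : GV σ π v := ⟨hinv, hσπ, hπ, hvπ, hvσ, hvmul, hvadd, heven⟩
  set c : F × F := (π ^ (-α)) • b with hc_def
  have hπα : (π : F) ^ (-α) ≠ 0 := zpow_ne_zero _ hπ
  have hσπα : σ (π ^ (-α)) ≠ 0 := h.σne hπα
  have hqce : herm σ c c = π ^ (-α) * (σ (π ^ (-α)) * herm σ b b) := by
    rw [hc_def, herm_smul_left, herm_smul_right]
  have hqc0 : herm σ c c ≠ 0 := by
    rw [hqce]; exact mul_ne_zero hπα (mul_ne_zero hσπα hb)
  have hvqc : v (herm σ c c) = 0 := by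
    rw [hqce, h.hvmul _ _ hπα (mul_ne_zero hσπα hb), h.hvmul _ _ hσπα hb, h.hvσ,
      h.vzpow, hα]
    ring
  -- common: walking to a lattice containing `c`
  have keymem : ∀ (T : Set (F × F)) (n : ℕ), WalkN σ π v n Λ T → c ∈ T →
      (π ^ (-(α - (n : ℤ)))) • b ∈ Λ := by
    intro T n hw hcT
    have hsm := GV.walk_smul hw c hcT
    have hpw : (π : F) ^ (-(α - (n : ℤ))) = (π ^ n : F) * π ^ (-α) := by
      have hz := zpow_add₀ hπ (n : ℤ) (-α)
      rw [zpow_natCast] at hz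
      rw [← hz]
      congr 1
      ring
    rw [hpw, mul_smul, ← hc_def]
    exact hsm
  constructor
  · -- the maximum is attained
    simp only [Set.mem_setOf_eq]
    rcases le_total k k' with hle | hle
    · have h1 : min (k : ℤ) (k' : ℤ) = (k : ℤ) := min_eq_left (by exact_mod_cast hle)
      rw [h1]
      exact keymem M k hk.1 (hMc hbin)
    · have h1 : min (k : ℤ) (k' : ℤ) = (k' : ℤ) := min_eq_right (by exact_mod_cast hle)
      rw [h1]
      exact keymem M' k' hk'.1 (hM'c hbin)
  · -- it is an upper bound
    intro m hm
    simp only [Set.mem_setOf_eq] at hm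
    have hπm : (π : F) ^ (-m) ≠ 0 := zpow_ne_zero _ hπ
    have hσπm : σ (π ^ (-m)) ≠ 0 := h.σne hπm
    have hqe : herm σ ((π ^ (-m)) • b) ((π ^ (-m)) • b)
        = π ^ (-m) * (σ (π ^ (-m)) * herm σ b b) := by
      rw [herm_smul_left, herm_smul_right]
    have hq0 : herm σ ((π ^ (-m)) • b) ((π ^ (-m)) • b) ≠ 0 := by
      rw [hqe]; exact mul_ne_zero hπm (mul_ne_zero hσπm hb)
    have hval : v (herm σ ((π ^ (-m)) • b) ((π ^ (-m)) • b)) = -m + (-m + 2 * α) := by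
      rw [hqe, h.hvmul _ _ hπm (mul_ne_zero hσπm hb), h.hvmul _ _ hσπm hb, h.hvσ,
        h.vzpow, hα]
    have hinO := h.v2_norm hΛ hm
    have hmα : m ≤ α := by
      rcases hinO with h0 | h1
      · exact absurd h0 hq0
      · rw [hval] at h1; omega
    set j : ℕ := (α - m).toNat with hj_def
    have hjz : (j : ℤ) = α - m := Int.toNat_of_nonneg (by omega)
    have hmem : (π ^ j) • c ∈ Λ := by
      have hpw : (π ^ j : F) * π ^ (-α) = π ^ (-m) := by
        have hz := zpow_add₀ hπ (j : ℤ) (-α)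
        rw [zpow_natCast] at hz
        rw [← hz, hjz]
        congr 1
        ring
      rw [hc_def, smul_smul, hpw]
      exact hm
    obtain ⟨l, hl, hw⟩ := h.key hqc0 hvqc hΛb hbin hbout honly j Λ hΛ hmem
    have hminl : min (k : ℤ) (k' : ℤ) ≤ (l : ℤ) := by
      rcases hw with hw | hw
      · have := hk.2 hw
        have : (k : ℤ) ≤ (l : ℤ) := by exact_mod_cast this
        omega
      · have := hk'.2 hw
        have : (k' : ℤ) ≤ (l : ℤ) := by exact_mod_cast this
        omega
    have hlj : (l : ℤ) ≤ (j : ℤ) := by exact_mod_cast hl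
    omega
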